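/- Let F = 𝔣(η) and G = 𝔤(η) be real-valued random variables determined by the Poisson measure η, let k ∈ ℕ and z₁,…,z_k ∈ Z. Then D^{(k)}_{z₁,…,z_k}(FG) = Σ_{W : |W| = k} K(D^{[W]}_{z₁,…,z_k}(F, G)), where the sum runs over all words W of length k in the alphabet {L, R, B}. -/

import Mathlib

open MeasureTheory ProbabilityTheory Filter

namespace PoissonFMT

variable {Z : Type*} [MeasurableSpace Z]

/-- The product measure `μ^p` on `Z^p`. -/
noncomputable def pmeas (μ : Measure Z) (p : ℕ) : Measure (Fin p → Z) :=
  Measure.pi fun _ => μ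


/-- A Poisson random measure on `(Z, 𝒵)` with σ-finite control `μ`,
defined on the probability space `(Ω, ℱ, P)`. -/
structure PoissonRandomMeasure (μ : Measure Z) {Ω : Type*} [MeasurableSpace Ω]
    (P : Measure Ω) : Type _ where
  η : Ω → Measure Z
  measurable_η : Measurable η
  point_valued : ∀ ω (B : Set Z), (∃ k : ℕ, η ω B = k) ∨ η ω B = ⊤
  sigmaFinite_η : ∀ ω, SigmaFinite (η ω)
  law_finite : ∀ B : Set Z, MeasurableSet B → μ B ≠ ⊤ → ∀ k : ℕ,
    P {ω | η ω B = k} =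
      ENNReal.ofReal (Real.exp (-(μ B).toReal) * (μ B).toReal ^ k / k.factorial)
  law_infinite : ∀ B : Set Z, MeasurableSet B → μ B = ⊤ → P {ω | η ω B = ⊤} = 1
  indep : ∀ (n : ℕ) (B : Fin n → Set Z), (∀ i, MeasurableSet (B i)) →
    Pairwise (Function.onFun Disjoint B) →
    iIndepFun (fun i ω => η ω (B i)) P

/-- The add-one-cost operator `D_z⁺` acting on a representative `𝔣 : N_σ → ℝ`:
`(D_z⁺ 𝔣)(χ) = 𝔣(χ + δ_z) - 𝔣(χ)`. -/
noncomputable def addCost (z : Z) (𝔣 : Measure Z → ℝ) : Measure Z → ℝ :=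
  fun χ => 𝔣 (χ + Measure.dirac z) - 𝔣 χ

/-- The iterated add-one-cost operator
`D^{(m)}_{z₁,…,z_m} = D_{z₁}⁺ ∘ D^{(m-1)}_{z₂,…,z_m}`. -/
noncomputable def addCostIter : (m : ℕ) → (Fin m → Z) → (Measure Z → ℝ) → Measure Z → ℝ
  | 0, _, 𝔣 => 𝔣
  | m + 1, zs, 𝔣 => addCost (zs 0) (addCostIter m (fun i => zs i.succ) 𝔣)

/-- The alphabet `{L, R, B}` used in the combinatorial book-keeping of iterated
add-one-cost operators of a product. -/
inductive Letter : Type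
  | L : Letter
  | R : Letter
  | B : Letter
  deriving DecidableEq

instance : Fintype Letter :=
  ⟨{Letter.L, Letter.R, Letter.B}, fun x => by cases x <;> simp⟩

/-- The operators `D_z^L`, `D_z^R`, `D_z^B` acting on pairs of representatives. -/
noncomputable def pairStep (z : Z) :
    Letter → (Measure Z → ℝ) × (Measure Z → ℝ) → (Measure Z → ℝ) × (Measure Z → ℝ)
  | .L, XY => (addCost z XY.1, XY.2)
  | .R, XY => (XY.1, addCost z XY.2)
  | .B, XY => (addCost z XY.1, addCost z XY.2)

/-- The iterated operator `D^{[W]}_{z₁,…,z_m}` associated with a word `W ∈ {L,R,B}^m`. -/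
noncomputable def pairIter : (m : ℕ) → (Fin m → Letter) → (Fin m → Z) →
    (Measure Z → ℝ) × (Measure Z → ℝ) → (Measure Z → ℝ) × (Measure Z → ℝ)
  | 0, _, _, XY => XY
  | m + 1, W, zs, XY =>
      pairStep (zs 0) (W 0) (pairIter m (fun i => W i.succ) (fun i => zs i.succ) XY)

lemma letter_step (z : Z) (X Y : Measure Z → ℝ) (χ : Measure Z) :
    ∑ ℓ : Letter, (pairStep z ℓ (X, Y)).1 χ * (pairStep z ℓ (X, Y)).2 χ =
      X (χ + Measure.dirac z) * Y (χ + Measure.dirac z) - X χ * Y χ := by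
  have h : (Finset.univ : Finset Letter) = {Letter.L, Letter.R, Letter.B} := by decide
  rw [h]
  simp [pairStep, addCost]
  ring

lemma key (𝔣 𝔤 : Measure Z → ℝ) :
    ∀ (k : ℕ) (z : Fin k → Z) (χ : Measure Z),
      addCostIter k z (fun x => 𝔣 x * 𝔤 x) χ =
        ∑ W : Fin k → Letter,
          (pairIter k W z (𝔣, 𝔤)).1 χ * (pairIter k W z (𝔣, 𝔤)).2 χ := by
  intro k
  induction k with
  | zero =>
      intro z χ
      simp [addCostIter, pairIter]
  | succ k ih =>
      intro z χ
      have hpair : ∀ (ℓ : Letter) (W' : Fin k → Letter),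
          pairIter (k + 1) (Fin.cons ℓ W') z (𝔣, 𝔤) =
            pairStep (z 0) ℓ (pairIter k W' (fun i => z i.succ) (𝔣, 𝔤)) := by
        intro ℓ W'
        have h0 : pairIter (k + 1) (Fin.cons ℓ W') z (𝔣, 𝔤) =
            pairStep (z 0) ((Fin.cons ℓ W' : Fin (k + 1) → Letter) 0)
              (pairIter k (fun i => (Fin.cons ℓ W' : Fin (k + 1) → Letter) i.succ)
                (fun i => z i.succ) (𝔣, 𝔤)) := rfl
        rw [h0]
        simp [Fin.cons_zero, Fin.cons_succ]
      calc addCostIter (k + 1) z (fun x => 𝔣 x * 𝔤 x) χ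
          = addCostIter k (fun i => z i.succ) (fun x => 𝔣 x * 𝔤 x) (χ + Measure.dirac (z 0))
            - addCostIter k (fun i => z i.succ) (fun x => 𝔣 x * 𝔤 x) χ := rfl
        _ = ∑ W' : Fin k → Letter,
              ((pairIter k W' (fun i => z i.succ) (𝔣, 𝔤)).1 (χ + Measure.dirac (z 0)) *
                (pairIter k W' (fun i => z i.succ) (𝔣, 𝔤)).2 (χ + Measure.dirac (z 0)) -
                (pairIter k W' (fun i => z i.succ) (𝔣, 𝔤)).1 χ *
                (pairIter k W' (fun i => z i.succ) (𝔣, 𝔤)).2 χ) := by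
            rw [ih, ih, Finset.sum_sub_distrib]
        _ = ∑ W' : Fin k → Letter, ∑ ℓ : Letter,
              (pairStep (z 0) ℓ (pairIter k W' (fun i => z i.succ) (𝔣, 𝔤))).1 χ *
              (pairStep (z 0) ℓ (pairIter k W' (fun i => z i.succ) (𝔣, 𝔤))).2 χ := by
            refine Finset.sum_congr rfl fun W' _ => ?_
            rw [letter_step]
        _ = ∑ p : Letter × (Fin k → Letter),
              (pairIter (k + 1) (Fin.cons p.1 p.2) z (𝔣, 𝔤)).1 χ *
              (pairIter (k + 1) (Fin.cons p.1 p.2) z (𝔣, 𝔤)).2 χ := by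
            rw [Fintype.sum_prod_type_right]
            refine Finset.sum_congr rfl fun W' _ => Finset.sum_congr rfl fun ℓ _ => ?_
            rw [hpair]
        _ = ∑ W : Fin (k + 1) → Letter,
              (pairIter (k + 1) W z (𝔣, 𝔤)).1 χ * (pairIter (k + 1) W z (𝔣, 𝔤)).2 χ := by
            exact Fintype.sum_equiv (Fin.consEquiv fun _ => Letter) _ _
              (fun p => rfl)

/-- For `F = 𝔣(η)`, `G = 𝔤(η)`, `k ∈ ℕ` and `z₁,…,z_k ∈ Z`,
`D^{(k)}_{z₁,…,z_k}(FG) = ∑_{|W| = k} K(D^{[W]}_{z₁,…,z_k}(F, G))`, the sum running over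
all words `W` of length `k` in the alphabet `{L, R, B}`. -/
theorem addCostIter_product_word_decomposition
    {Z : Type*} [MeasurableSpace Z] (μ : Measure Z) [SigmaFinite μ]
    {Ω : Type*} [MeasurableSpace Ω] (P : Measure Ω) [IsProbabilityMeasure P]
    (S : PoissonRandomMeasure μ P)
    (𝔣 𝔤 : Measure Z → ℝ) (h𝔣 : Measurable 𝔣) (h𝔤 : Measurable 𝔤)
    (k : ℕ) (hk : 1 ≤ k) (z : Fin k → Z) :
    ∀ ω, addCostIter k z (fun χ => 𝔣 χ * 𝔤 χ) (S.η ω) =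
      ∑ W : Fin k → Letter,
        (pairIter k W z (𝔣, 𝔤)).1 (S.η ω) * (pairIter k W z (𝔣, 𝔤)).2 (S.η ω) := by
  intro ω
  exact key 𝔣 𝔤 k z (S.η ω)

end PoissonFMT
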